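/- For all integers ℓ ≥ 3 and m ≥ 3, there exists a finite set P ⊆ ℝ² with pairwise distinct x-coordinates, containing no ℓ collinear points, no m-cup, and no 3-cap, such that 2·|P| ≥ (ℓ − 1)·(m − 1) − (ℓ − 3). (Explicitly, one may take |P| = (ℓ−1)(m−1)/2 when m−1 is even and |P| = (ℓ−1)(m−2)/2 + 1 when m−1 is odd.) -/
import Mathlib


open Finset

noncomputable section

abbrev Pt : Type := ℝ × ℝ

/-- `P` contains `l` collinear points. -/
def HasCollinear (l : ℕ) (P : Finset Pt) : Prop :=
  ∃ S : Finset Pt, S ⊆ P ∧ S.card = l ∧ Collinear ℝ (S : Set Pt)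

/-- `X` is in convex position: no point of `X` lies in the convex hull of the others. -/
def ConvexPos (X : Finset Pt) : Prop :=
  ∀ x ∈ X, x ∉ convexHull ℝ ((X.erase x : Finset Pt) : Set Pt)

/-- `p 0, …, p (k-1)` have strictly increasing x-coordinates and each `p (i+1)` lies
strictly below the line through `p i` and `p (i+2)` (a `k`-cup). -/
def IsCupSeq {k : ℕ} (p : Fin k → Pt) : Prop :=
  (∀ i j : Fin k, i < j → (p i).1 < (p j).1) ∧
  ∀ i : ℕ, ∀ h : i + 2 < k,
    ((p ⟨i + 1, by omega⟩).2 - (p ⟨i, by omega⟩).2) * ((p ⟨i + 2, h⟩).1 - (p ⟨i, by omega⟩).1)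
      < ((p ⟨i + 2, h⟩).2 - (p ⟨i, by omega⟩).2) * ((p ⟨i + 1, by omega⟩).1 - (p ⟨i, by omega⟩).1)

/-- `p 0, …, p (k-1)` have strictly increasing x-coordinates and each `p (i+1)` lies
strictly above the line through `p i` and `p (i+2)` (a `k`-cap). -/
def IsCapSeq {k : ℕ} (p : Fin k → Pt) : Prop :=
  (∀ i j : Fin k, i < j → (p i).1 < (p j).1) ∧
  ∀ i : ℕ, ∀ h : i + 2 < k,
    ((p ⟨i + 1, by omega⟩).2 - (p ⟨i, by omega⟩).2) * ((p ⟨i + 2, h⟩).1 - (p ⟨i, by omega⟩).1)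
      > ((p ⟨i + 2, h⟩).2 - (p ⟨i, by omega⟩).2) * ((p ⟨i + 1, by omega⟩).1 - (p ⟨i, by omega⟩).1)

/-- `P` contains a `k`-cup. -/
def HasCup (k : ℕ) (P : Finset Pt) : Prop :=
  ∃ p : Fin k → Pt, (∀ i, p i ∈ P) ∧ IsCupSeq p

/-- `P` contains a `k`-cap. -/
def HasCap (k : ℕ) (P : Finset Pt) : Prop :=
  ∃ p : Fin k → Pt, (∀ i, p i ∈ P) ∧ IsCapSeq p

/-- The points of `P` have pairwise distinct x-coordinates. -/
def DistinctX (P : Finset Pt) : Prop :=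
  Set.InjOn Prod.fst (P : Set Pt)

/-- There is an affine line (given by the equation `a*x + b*y = c`) strictly
separating `A` from `B`. -/
def SepLine (A B : Set Pt) : Prop :=
  ∃ a b c : ℝ, (a, b) ≠ ((0 : ℝ), (0 : ℝ)) ∧ (∀ x ∈ A, a * x.1 + b * x.2 < c) ∧
    (∀ y ∈ B, c < a * y.1 + b * y.2)

/-- `P` avoids `K`: the line through any two distinct points of `P` is disjoint from `K`. -/
def Avoids (P : Finset Pt) (K : Set Pt) : Prop :=
  ∀ p ∈ P, ∀ q ∈ P, p ≠ q → ∀ x ∈ K, x ∉ affineSpan ℝ ({p, q} : Set Pt)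

/-- `X` is an inner-cap with respect to `K`. -/
def InnerCap (K : Set Pt) (X : Finset Pt) : Prop :=
  ∀ x ∈ X, SepLine {x} (convexHull ℝ (((X.erase x : Finset Pt) : Set Pt) ∪ K))

/-- `X` is an outer-cup with respect to `K`. -/
def OuterCup (K : Set Pt) (X : Finset Pt) : Prop :=
  ∀ x ∈ X, SepLine (convexHull ℝ ({x} ∪ K)) ((X.erase x : Finset Pt) : Set Pt)

/-- The line `L` crosses the cell `Δ`: it meets `Δ` but does not contain it. -/
def Crosses (L Δ : Set Pt) : Prop := (L ∩ Δ).Nonempty ∧ ¬ Δ ⊆ L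

/-- point j of segment i, with l points resolution -/
def mypt (l i j : ℕ) : Pt :=
  ((i : ℝ) + ((j : ℝ) + 1) / l, (i : ℝ) * ((i : ℝ) - 1) / 2 + (i : ℝ) * (((j : ℝ) + 1) / l))

lemma u_pos {l j : ℕ} (hl : 0 < l) : 0 < ((j : ℝ) + 1) / l := by
  apply div_pos <;> [positivity; exact_mod_cast hl]

lemma u_lt_one {l j : ℕ} (hj : j + 1 < l) : ((j : ℝ) + 1) / l < 1 := by
  rw [div_lt_one (by exact_mod_cast by omega)]
  exact_mod_cast hj

lemma x_mono {l i j i' j' : ℕ} (hj : j + 1 < l) (hi : i < i') :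
    (mypt l i j).1 < (mypt l i' j').1 := by
  have h1 := u_lt_one hj
  have h2 := u_pos (l := l) (j := j') (by omega)
  have : (i : ℝ) + 1 ≤ (i' : ℝ) := by exact_mod_cast hi
  simp only [mypt]
  linarith

lemma x_mono_j {l i j j' : ℕ} (hl : 0 < l) (hj : j < j') :
    (mypt l i j).1 < (mypt l i j').1 := by
  have : ((j : ℝ) + 1) / l < ((j' : ℝ) + 1) / l := by
    have hl' : (0:ℝ) < l := by exact_mod_cast hl
    rw [div_lt_div_iff_of_pos_right hl']
    have : j + 1 < j' + 1 := by omega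
    exact_mod_cast this
  simpa [mypt] using this

lemma seg_le_of_x_lt {l i j i' j' : ℕ} (hj' : j' + 1 < l)
    (h : (mypt l i j).1 < (mypt l i' j').1) : i ≤ i' := by
  by_contra hc
  exact absurd (x_mono (i := i') (j := j') (i' := i) (j' := j) hj' (by omega : i' < i)) (by linarith)

lemma idx_eq_of_x_eq {l i j i' j' : ℕ} (hj : j + 1 < l) (hj' : j' + 1 < l)
    (h : (mypt l i j).1 = (mypt l i' j').1) : i = i' ∧ j = j' := by
  have hl : 0 < l := by omega
  have hi : i = i' := by
    rcases lt_trichotomy i i' with h1 | h1 | h1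
    · exact absurd (x_mono (j' := j') hj h1) (by linarith)
    · exact h1
    · exact absurd (x_mono (j' := j) hj' h1) (by linarith)
  subst hi
  refine ⟨rfl, ?_⟩
  rcases lt_trichotomy j j' with h1 | h1 | h1
  · exact absurd (x_mono_j hl h1) (by linarith)
  · exact h1
  · exact absurd (x_mono_j hl h1) (by linarith)

lemma pt_eq_of_x_eq {l i j i' j' : ℕ} (hj : j + 1 < l) (hj' : j' + 1 < l)
    (h : (mypt l i j).1 = (mypt l i' j').1) : mypt l i j = mypt l i' j' := by
  obtain ⟨h1, h2⟩ := idx_eq_of_x_eq hj hj' h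
  rw [h1, h2]

/-- slope within a segment equals i -/
lemma cross_same (l i j j' : ℕ) :
    (mypt l i j').2 - (mypt l i j).2 = (i : ℝ) * ((mypt l i j').1 - (mypt l i j).1) := by
  simp only [mypt]; ring

/-- slope across segments is strictly between i and i' -/
lemma cross_lt {l i j i' j' : ℕ} (hj : j + 1 < l) (hj' : j' + 1 < l) (hi : i < i') :
    (i : ℝ) * ((mypt l i' j').1 - (mypt l i j).1)
        < (mypt l i' j').2 - (mypt l i j).2 ∧
      (mypt l i' j').2 - (mypt l i j).2
        < (i' : ℝ) * ((mypt l i' j').1 - (mypt l i j).1) := by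
  have hl : 0 < l := by omega
  have h1 : (i : ℝ) + 1 ≤ (i' : ℝ) := by exact_mod_cast hi
  have hu1 := u_pos (l := l) (j := j) hl
  have hu2 := u_lt_one hj
  have hu3 := u_pos (l := l) (j := j') hl
  have hu4 := u_lt_one hj'
  set u : ℝ := ((j : ℝ) + 1) / l with hu
  set u' : ℝ := ((j' : ℝ) + 1) / l with hu'
  constructor
  · simp only [mypt, ← hu, ← hu']
    nlinarith [mul_pos (show (0:ℝ) < (i':ℝ) - (i:ℝ) by linarith) hu3,
      mul_nonneg (show (0:ℝ) ≤ (i':ℝ) - (i:ℝ) - 1 by linarith)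
        (show (0:ℝ) ≤ (i':ℝ) - (i:ℝ) by linarith)]
  · simp only [mypt, ← hu, ← hu']
    nlinarith [mul_lt_mul_of_pos_left (show u < ((i':ℝ) - (i:ℝ) + 1)/2 by linarith)
      (show (0:ℝ) < (i':ℝ) - (i:ℝ) by linarith)]

lemma triple_lt {l i1 j1 i2 j2 i3 j3 : ℕ} (h1 : j1 + 1 < l) (h2 : j2 + 1 < l) (h3 : j3 + 1 < l)
    (hx1 : (mypt l i1 j1).1 < (mypt l i2 j2).1) (hx2 : (mypt l i2 j2).1 < (mypt l i3 j3).1)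
    (hne : i1 ≠ i3) :
    ((mypt l i2 j2).2 - (mypt l i1 j1).2) * ((mypt l i3 j3).1 - (mypt l i2 j2).1)
      < ((mypt l i3 j3).2 - (mypt l i2 j2).2) * ((mypt l i2 j2).1 - (mypt l i1 j1).1) := by
  have hi12 : i1 ≤ i2 := seg_le_of_x_lt h2 hx1
  have hi23 : i2 ≤ i3 := seg_le_of_x_lt h3 hx2
  have hxab : (0:ℝ) < (mypt l i2 j2).1 - (mypt l i1 j1).1 := by linarith
  have hxbc : (0:ℝ) < (mypt l i3 j3).1 - (mypt l i2 j2).1 := by linarith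
  rcases eq_or_lt_of_le hi12 with he12 | hlt12
  · -- i1 = i2 < i3
    have hlt23 : i2 < i3 := by omega
    subst he12
    have hab := cross_same l i1 j1 j2
    have hbc := (cross_lt h2 h3 hlt23).1
    nlinarith [mul_lt_mul_of_pos_left hbc hxab]
  · rcases eq_or_lt_of_le hi23 with he23 | hlt23
    · -- i1 < i2 = i3
      subst he23
      have hbc := cross_same l i2 j2 j3
      have hab := (cross_lt h1 h2 hlt12).2
      nlinarith [mul_lt_mul_of_pos_left hab hxbc]
    · -- i1 < i2 < i3
      have hab := (cross_lt h1 h2 hlt12).2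
      have hbc := (cross_lt h2 h3 hlt23).1
      nlinarith [mul_lt_mul_of_pos_left hab hxbc, mul_lt_mul_of_pos_left hbc hxab]

lemma triple_le {l i1 j1 i2 j2 i3 j3 : ℕ} (h1 : j1 + 1 < l) (h2 : j2 + 1 < l) (h3 : j3 + 1 < l)
    (hx1 : (mypt l i1 j1).1 < (mypt l i2 j2).1) (hx2 : (mypt l i2 j2).1 < (mypt l i3 j3).1) :
    ((mypt l i2 j2).2 - (mypt l i1 j1).2) * ((mypt l i3 j3).1 - (mypt l i2 j2).1)
      ≤ ((mypt l i3 j3).2 - (mypt l i2 j2).2) * ((mypt l i2 j2).1 - (mypt l i1 j1).1) := by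
  by_cases hne : i1 = i3
  · have hi12 : i1 ≤ i2 := seg_le_of_x_lt h2 hx1
    have hi23 : i2 ≤ i3 := seg_le_of_x_lt h3 hx2
    have e2 : i2 = i1 := by omega
    rw [show i2 = i1 from e2, show i3 = i1 from hne.symm,
      cross_same l i1 j1 j2, cross_same l i1 j2 j3]
    exact le_of_eq (by ring)
  · exact (triple_lt h1 h2 h3 hx1 hx2 hne).le

lemma seg_le_of_x_le {l i j i' j' : ℕ} (hj : j + 1 < l) (hj' : j' + 1 < l)
    (h : (mypt l i j).1 ≤ (mypt l i' j').1) : i ≤ i' := by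
  rcases eq_or_lt_of_le h with h1 | h1
  · exact (idx_eq_of_x_eq hj hj' h1).1.le
  · exact seg_le_of_x_lt hj' h1

lemma cross_convert (a b c : Pt) :
    (b.2 - a.2) * (c.1 - a.1) - (c.2 - a.2) * (b.1 - a.1)
      = (b.2 - a.2) * (c.1 - b.1) - (c.2 - b.2) * (b.1 - a.1) := by ring


/-- **Base case of the lower bound for `f_ℓ(m,3)`.** For all `ℓ, m ≥ 3` there is a finite
planar point set with pairwise distinct x-coordinates, no `ℓ` collinear points, no `m`-cup
and no 3-cap, such that `2·|P| ≥ (ℓ−1)(m−1) − (ℓ−3)`. -/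
theorem stmt10 :
    ∀ l m : ℕ, 3 ≤ l → 3 ≤ m → ∃ P : Finset Pt,
      DistinctX P ∧
      ¬ HasCollinear l P ∧ ¬ HasCup m P ∧ ¬ HasCap 3 P ∧
      (l - 1) * (m - 1) - (l - 3) ≤ 2 * P.card := by
  intro l m hl hm
  set t : ℕ := (m - 1) / 2 with ht
  set e : ℕ := (m - 1) % 2 with he
  have hte : 2 * t + e = m - 1 := by omega
  have he1 : e ≤ 1 := by omega
  set D : Finset (ℕ × ℕ) := (range t ×ˢ range (l - 1)) ∪ ({t} ×ˢ range e) with hD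
  have hmemD : ∀ i j : ℕ, (i, j) ∈ D ↔ ((i < t ∧ j < l - 1) ∨ (i = t ∧ j < e)) := by
    intro i j
    simp only [hD, Finset.mem_union, Finset.mem_product, Finset.mem_range, Finset.mem_singleton]
    try tauto
  set P : Finset Pt := D.image (fun ij => mypt l ij.1 ij.2) with hP
  have hrep : ∀ q ∈ P, ∃ i j : ℕ, ((i < t ∧ j < l - 1) ∨ (i = t ∧ j < e)) ∧ q = mypt l i j := by
    intro q hq
    obtain ⟨⟨i, j⟩, hij, rfl⟩ := Finset.mem_image.1 hq
    exact ⟨i, j, (hmemD i j).1 hij, rfl⟩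
  have hvalid : ∀ {i j : ℕ}, ((i < t ∧ j < l - 1) ∨ (i = t ∧ j < e)) → j + 1 < l := by
    intro i j h; omega
  refine ⟨P, ?_, ?_, ?_, ?_, ?_⟩
  · -- DistinctX
    intro p hp q hq hpq
    obtain ⟨i, j, hd, rfl⟩ := hrep p hp
    obtain ⟨i', j', hd', rfl⟩ := hrep q hq
    exact pt_eq_of_x_eq (hvalid hd) (hvalid hd') hpq
  · -- no l collinear
    rintro ⟨S, hSP, hScard, hScol⟩
    have hdx : ∀ q ∈ S, ∀ q' ∈ S, q.1 = q'.1 → q = q' := by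
      intro q hq q' hq' hqq
      obtain ⟨i, j, hd, rfl⟩ := hrep q (hSP hq)
      obtain ⟨i', j', hd', rfl⟩ := hrep q' (hSP hq')
      exact pt_eq_of_x_eq (hvalid hd) (hvalid hd') hqq
    obtain ⟨a, haS, hamin⟩ := S.exists_min_image Prod.fst (by rw [← Finset.card_pos, hScard]; omega)
    obtain ⟨c, hcS, hcmax⟩ := S.exists_max_image Prod.fst (by rw [← Finset.card_pos, hScard]; omega)
    have hac : a ≠ c := by
      intro h
      obtain ⟨x, hx, y, hy, hxy⟩ := Finset.one_lt_card.1 (by omega : 1 < S.card)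
      apply hxy
      apply hdx x hx y hy
      have h1 := hamin x hx
      have h2 := hcmax x hx
      have h3 := hamin y hy
      have h4 := hcmax y hy
      rw [h] at h1 h3
      linarith
    have hb : ∃ b ∈ S, b ≠ a ∧ b ≠ c := by
      have h2 : ({a, c} : Finset Pt).card ≤ 2 := Finset.card_le_two
      have h3 := Finset.le_card_sdiff ({a, c} : Finset Pt) S
      obtain ⟨b, hbmem⟩ := Finset.card_pos.1 (by omega : 0 < (S \ {a, c}).card)
      rw [Finset.mem_sdiff, Finset.mem_insert, Finset.mem_singleton] at hbmem
      exact ⟨b, hbmem.1, by tauto, by tauto⟩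
    obtain ⟨b, hbS, hba, hbc⟩ := hb
    have hxab : a.1 < b.1 := lt_of_le_of_ne (hamin b hbS) (fun h => hba (hdx b hbS a haS h.symm))
    have hxbc : b.1 < c.1 := lt_of_le_of_ne (hcmax b hbS) (fun h => hbc (hdx b hbS c hcS h))
    -- collinearity gives cross-product equality
    have hcross : (b.2 - a.2) * (c.1 - b.1) = (c.2 - b.2) * (b.1 - a.1) := by
      rw [collinear_iff_of_mem (Finset.mem_coe.2 haS)] at hScol
      obtain ⟨v, hv⟩ := hScol
      obtain ⟨rb, hrb⟩ := hv b (Finset.mem_coe.2 hbS)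
      obtain ⟨rc, hrc⟩ := hv c (Finset.mem_coe.2 hcS)
      have hb1 : b.1 = rb * v.1 + a.1 := by rw [hrb]; rfl
      have hb2 : b.2 = rb * v.2 + a.2 := by rw [hrb]; rfl
      have hc1 : c.1 = rc * v.1 + a.1 := by rw [hrc]; rfl
      have hc2 : c.2 = rc * v.2 + a.2 := by rw [hrc]; rfl
      rw [hb1, hb2, hc1, hc2]; ring
    obtain ⟨ia, ja, hda, hea⟩ := hrep a (hSP haS)
    obtain ⟨ib, jb, hdb, heb⟩ := hrep b (hSP hbS)
    obtain ⟨ic, jc, hdc, hec⟩ := hrep c (hSP hcS)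
    have hiac : ia = ic := by
      by_contra hne
      have := triple_lt (hvalid hda) (hvalid hdb) (hvalid hdc)
        (by rw [← hea, ← heb]; exact hxab) (by rw [← heb, ← hec]; exact hxbc) hne
      rw [← hea, ← heb, ← hec] at this
      linarith
    -- every point of S lies in segment ia
    have hseg : ∀ d ∈ S, ∃ jd, ((ia < t ∧ jd < l - 1) ∨ (ia = t ∧ jd < e)) ∧ d = mypt l ia jd := by
      intro d hdS
      obtain ⟨id, jd, hdd, hed⟩ := hrep d (hSP hdS)
      have h1 : ia ≤ id := by
        apply seg_le_of_x_le (hvalid hda) (hvalid hdd)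
        rw [← hea, ← hed]; exact hamin d hdS
      have h2 : id ≤ ic := by
        apply seg_le_of_x_le (hvalid hdd) (hvalid hdc)
        rw [← hed, ← hec]; exact hcmax d hdS
      have : id = ia := by omega
      rw [this] at hdd hed
      exact ⟨jd, hdd, hed⟩
    -- so S is contained in a set of at most l-1 points
    have hsub : S ⊆ (range (l - 1) ∪ range e).image (fun j => mypt l ia j) := by
      intro d hdS
      obtain ⟨jd, hdd, hed⟩ := hseg d hdS
      refine Finset.mem_image.2 ⟨jd, ?_, hed.symm⟩
      rw [Finset.mem_union, Finset.mem_range, Finset.mem_range]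
      omega
    have hle := Finset.card_le_card hsub
    have h2 := Finset.card_image_le (s := range (l - 1) ∪ range e) (f := fun j => mypt l ia j)
    have h3 : (range (l - 1) ∪ range e).card ≤ l - 1 := by
      rcases (by omega : e ≤ l - 1) with h
      rw [Finset.union_eq_left.2 (by exact Finset.range_subset_range.2 (by omega))]
      exact (Finset.card_range (l - 1)).le
    omega
  · -- no m-cup
    rintro ⟨p, hpP, hord, hcup⟩
    choose fi fj hf using fun k => hrep (p k) (hpP k)
    have hmono : ∀ k k' : Fin m, k < k' → fi k ≤ fi k' := by
      intro k k' hk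
      have hx := hord k k' hk
      rw [(hf k).2, (hf k').2] at hx
      exact seg_le_of_x_lt (hvalid (hf k').1) hx
    -- three cup points in the same segment are impossible
    have hfib2 : ∀ i, (univ.filter (fun k : Fin m => fi k = i)).card ≤ 2 := by
      intro i
      by_contra hcon
      push_neg at hcon
      set F := univ.filter (fun k : Fin m => fi k = i) with hF
      have hFne : F.Nonempty := Finset.card_pos.1 (by omega)
      set k1 := F.min' hFne with hk1
      set k3 := F.max' hFne with hk3
      have hk1F : k1 ∈ F := F.min'_mem hFne
      have hk3F : k3 ∈ F := F.max'_mem hFne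
      have hsub : F ⊆ Finset.Icc k1 k3 := by
        intro k hk
        exact Finset.mem_Icc.2 ⟨F.min'_le k hk, F.le_max' k hk⟩
      have hIcc : (Finset.Icc k1 k3).card = (k3 : ℕ) + 1 - k1 := by
        simp [Fin.card_Icc]
      have hcard3 : (k1 : ℕ) + 2 ≤ (k3 : ℕ) := by
        have := Finset.card_le_card hsub
        omega
      have hm2 : (k1 : ℕ) + 2 < m := by have := k3.isLt; omega
      set kb : Fin m := ⟨(k1 : ℕ) + 1, by omega⟩ with hkb
      set kc : Fin m := ⟨(k1 : ℕ) + 2, hm2⟩ with hkc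
      have hik1 : fi k1 = i := (Finset.mem_filter.1 hk1F).2
      have hik3 : fi k3 = i := (Finset.mem_filter.1 hk3F).2
      have hmono' : ∀ k k' : Fin m, k ≤ k' → fi k ≤ fi k' := by
        intro k k' hk
        rcases eq_or_lt_of_le hk with h' | h'
        · rw [h']
        · exact hmono k k' h'
      have hib : fi kb = i := by
        have h1 := hmono' k1 kb (by simp [hkb, Fin.le_def])
        have h2 := hmono' kb k3 (by simp [hkb, Fin.le_def]; omega)
        omega
      have hic : fi kc = i := by
        have h1 := hmono' k1 kc (by simp [hkc, Fin.le_def])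
        have h2 := hmono' kc k3 (by simp [hkc, Fin.le_def]; omega)
        omega
      have hc := hcup (k1 : ℕ) hm2
      have e0 : p ⟨(k1 : ℕ), by omega⟩ = p k1 := by congr
      have e1 : p ⟨(k1 : ℕ) + 1, by omega⟩ = p kb := rfl
      have e2 : p ⟨(k1 : ℕ) + 2, hm2⟩ = p kc := rfl
      rw [e0, e1, e2] at hc
      rw [(hf k1).2, (hf kb).2, (hf kc).2, hik1, hib, hic] at hc
      have hs1 := cross_same l i (fj k1) (fj kb)
      have hs2 := cross_same l i (fj kb) (fj kc)
      have hid := cross_convert (mypt l i (fj k1)) (mypt l i (fj kb)) (mypt l i (fj kc))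
      have hz : ((mypt l i (fj kb)).2 - (mypt l i (fj k1)).2) * ((mypt l i (fj kc)).1 - (mypt l i (fj k1)).1)
          - ((mypt l i (fj kc)).2 - (mypt l i (fj k1)).2) * ((mypt l i (fj kb)).1 - (mypt l i (fj k1)).1) = 0 := by
        rw [hid, hs1, hs2]; ring
      linarith
    have hfibt : (univ.filter (fun k : Fin m => fi k = t)).card ≤ e := by
      rcases (by omega : e = 0 ∨ e = 1) with h0 | h1
      · rw [h0, Nat.le_zero, Finset.card_eq_zero, Finset.filter_eq_empty_iff]
        intro k _
        have := (hf k).1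
        omega
      · rw [h1, Finset.card_le_one]
        intro k hk k' hk'
        have h1' : fi k = t := (Finset.mem_filter.1 hk).2
        have h2' : fi k' = t := (Finset.mem_filter.1 hk').2
        have hj1 : fj k = 0 := by have := (hf k).1; omega
        have hj2 : fj k' = 0 := by have := (hf k').1; omega
        by_contra hne
        have hpq : p k = p k' := by
          rw [(hf k).2, (hf k').2, h1', h2', hj1, hj2]
        rcases Ne.lt_or_gt hne with hlt | hlt
        · exact absurd (congrArg Prod.fst hpq) (ne_of_lt (hord k k' hlt))
        · exact absurd (congrArg Prod.fst hpq).symm (ne_of_lt (hord k' k hlt))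
    have hcount : m = ∑ i ∈ range (t + 1), (univ.filter (fun k : Fin m => fi k = i)).card := by
      have hcf := Finset.card_eq_sum_card_fiberwise
        (f := fi) (s := Finset.univ) (t := range (t + 1))
        (fun k _ => Finset.mem_range.2 (by have := (hf k).1; omega))
      rw [Finset.card_univ, Fintype.card_fin] at hcf
      exact hcf
    have hbound : ∑ i ∈ range (t + 1), (univ.filter (fun k : Fin m => fi k = i)).card ≤ 2 * t + e := by
      rw [Finset.sum_range_succ]
      have h1 : ∑ i ∈ range t, (univ.filter (fun k : Fin m => fi k = i)).card ≤ ∑ _i ∈ range t, 2 :=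
        Finset.sum_le_sum (fun i _ => hfib2 i)
      rw [Finset.sum_const, Finset.card_range, smul_eq_mul] at h1
      omega
    omega
  · -- no 3-cap
    rintro ⟨p, hpP, hord, hcap⟩
    obtain ⟨i1, j1, hd1, he1'⟩ := hrep (p 0) (hpP 0)
    obtain ⟨i2, j2, hd2, he2'⟩ := hrep (p 1) (hpP 1)
    obtain ⟨i3, j3, hd3, he3'⟩ := hrep (p 2) (hpP 2)
    have hx1 : (p 0).1 < (p 1).1 := hord 0 1 (by decide)
    have hx2 : (p 1).1 < (p 2).1 := hord 1 2 (by decide)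
    have hc := hcap 0 (by omega)
    have h0 : p ⟨0, by omega⟩ = p 0 := rfl
    have h1 : p ⟨1, by omega⟩ = p 1 := rfl
    have h2 : p ⟨2, by omega⟩ = p 2 := rfl
    rw [h0, h1, h2] at hc
    simp only [he1', he2', he3'] at hx1 hx2 hc
    have hle := triple_le (hvalid hd1) (hvalid hd2) (hvalid hd3) hx1 hx2
    have hid := cross_convert (mypt l i1 j1) (mypt l i2 j2) (mypt l i3 j3)
    nlinarith [hle, hc, hid]
  · -- cardinality
    have hinj : Set.InjOn (fun ij : ℕ × ℕ => mypt l ij.1 ij.2) D := by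
      rintro ⟨i, j⟩ hij ⟨i', j'⟩ hij' heq
      have h1 := hvalid ((hmemD i j).1 (Finset.mem_coe.1 hij))
      have h2 := hvalid ((hmemD i' j').1 (Finset.mem_coe.1 hij'))
      have := idx_eq_of_x_eq h1 h2 (congrArg Prod.fst heq)
      simp only [Prod.mk.injEq]
      exact ⟨this.1, this.2⟩
    have hDcard : D.card = t * (l - 1) + e := by
      rw [hD, Finset.card_union_of_disjoint]
      · simp
      · rw [Finset.disjoint_left]
        rintro ⟨i, j⟩ h1 h2
        simp only [Finset.mem_product, Finset.mem_range, Finset.mem_singleton] at h1 h2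
        omega
    have hPcard : P.card = t * (l - 1) + e := by
      rw [hP, Finset.card_image_of_injOn hinj, hDcard]
    rw [hPcard]
    rcases (by omega : e = 0 ∨ e = 1) with h | h
    · have hm1 : m - 1 = 2 * t := by omega
      have hkey : (l - 1) * (m - 1) = 2 * (t * (l - 1)) := by rw [hm1]; ring
      rw [h]
      generalize t * (l - 1) = X at hkey ⊢
      generalize (l - 1) * (m - 1) = Y at hkey ⊢
      omega
    · have hm1 : m - 1 = 2 * t + 1 := by omega
      have hkey : (l - 1) * (m - 1) = 2 * (t * (l - 1)) + (l - 1) := by rw [hm1]; ring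
      rw [h]
      generalize t * (l - 1) = X at hkey ⊢
      generalize (l - 1) * (m - 1) = Y at hkey ⊢
      omega


end
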